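/- Let m ≥ 1, d ≥ 1, and let M₁, …, M_m be symmetric real d×d matrices, regarded as complex matrices. For every ψ ∈ ℂ^d with Σᵢ |ψᵢ|² = 1, the point (⟨ψ, M₁·ψ⟩, …, ⟨ψ, M_m·ψ⟩) ∈ ℝ^m (each such inner product is real because M_k is real symmetric, hence Hermitian) lies in the convex hull (over ℝ) of the set { (xᵀM₁x, …, xᵀM_mx) : x ∈ ℝ^d, Σᵢ xᵢ² = 1 }. Hence, to generate the convex hull of the set of fidelity vectors produced by pure states, it suffices to consider pure states with real coefficients only. -/

import Mathlib

open Matrix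

private lemma stmt6_key (d : ℕ) (M : Matrix (Fin d) (Fin d) ℝ) (hM : ∀ i j, M i j = M j i)
    (ψ : Fin d → ℂ) :
    (∑ i, (starRingEnd ℂ) (ψ i) * ((M.map Complex.ofReal) *ᵥ ψ) i)
      = (((fun i => (ψ i).re) ⬝ᵥ (M *ᵥ fun i => (ψ i).re)
          + (fun i => (ψ i).im) ⬝ᵥ (M *ᵥ fun i => (ψ i).im) : ℝ) : ℂ) := by
  simp only [Matrix.mulVec, dotProduct, Matrix.map_apply, Finset.mul_sum]
  rw [Complex.ext_iff]
  constructor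
  · simp [Complex.re_sum, Complex.mul_re, Complex.ofReal_re, Finset.sum_add_distrib,
      Finset.mul_sum]
  · simp only [Complex.im_sum, Complex.mul_im]
    simp [Complex.mul_im]
    have h1 : ∑ x : Fin d, ∑ y : Fin d, (ψ x).im * (M x y * (ψ y).re)
        = ∑ x : Fin d, ∑ y : Fin d, (ψ x).re * (M x y * (ψ y).im) := by
      rw [Finset.sum_comm]
      exact Finset.sum_congr rfl fun x _ => Finset.sum_congr rfl fun y _ => by rw [hM]; ring
    simp only [Finset.sum_add_distrib, Finset.sum_neg_distrib]
    linarith [h1]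

/-- To generate the convex hull of the set of vectors of quadratic forms (fidelity vectors)
produced by pure states, it suffices to consider pure states with real coefficients only:
the vector of expectation values of real symmetric matrices in any complex pure state is real
and lies in the convex hull of the vectors produced by real unit vectors. -/
theorem stmt6 (m d : ℕ) (hm : 1 ≤ m) (hd : 1 ≤ d)
    (M : Fin m → Matrix (Fin d) (Fin d) ℝ) (hsym : ∀ k, (M k)ᵀ = M k)
    (ψ : Fin d → ℂ) (hψ : ∑ i, Complex.normSq (ψ i) = 1) :
    (∀ k : Fin m,
        (∑ i, (starRingEnd ℂ) (ψ i) * (((M k).map Complex.ofReal) *ᵥ ψ) i).im = 0) ∧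
      (fun k : Fin m =>
          (∑ i, (starRingEnd ℂ) (ψ i) * (((M k).map Complex.ofReal) *ᵥ ψ) i).re) ∈
        convexHull ℝ
          {p : Fin m → ℝ | ∃ x : Fin d → ℝ,
            (∑ i, x i ^ 2 = 1) ∧ p = fun k => x ⬝ᵥ (M k *ᵥ x)} := by
  set S := {p : Fin m → ℝ | ∃ x : Fin d → ℝ,
      (∑ i, x i ^ 2 = 1) ∧ p = fun k => x ⬝ᵥ (M k *ᵥ x)} with hS
  set a : Fin d → ℝ := fun i => (ψ i).re with ha
  set b : Fin d → ℝ := fun i => (ψ i).im with hb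
  have hMsym : ∀ k (i j : Fin d), M k i j = M k j i := fun k i j => by
    have := congrFun (congrFun (hsym k) j) i
    simpa [Matrix.transpose_apply] using this
  have key : ∀ k, (∑ i, (starRingEnd ℂ) (ψ i) * (((M k).map Complex.ofReal) *ᵥ ψ) i)
      = ((a ⬝ᵥ (M k *ᵥ a) + b ⬝ᵥ (M k *ᵥ b) : ℝ) : ℂ) :=
    fun k => stmt6_key d (M k) (hMsym k) ψ
  constructor
  · intro k; rw [key k]; simp
  have hre : (fun k : Fin m =>
      (∑ i, (starRingEnd ℂ) (ψ i) * (((M k).map Complex.ofReal) *ᵥ ψ) i).re)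
      = fun k => a ⬝ᵥ (M k *ᵥ a) + b ⬝ᵥ (M k *ᵥ b) := by
    funext k; rw [key k]; simp
  rw [hre]
  -- norms
  have hsa : ∑ i, a i ^ 2 + ∑ i, b i ^ 2 = 1 := by
    rw [← Finset.sum_add_distrib, ← hψ]
    exact Finset.sum_congr rfl fun i _ => by
      simp [Complex.normSq_apply, ha, hb]; ring
  set sa := ∑ i, a i ^ 2 with hsadef
  set sb := ∑ i, b i ^ 2 with hsbdef
  have hsa0 : 0 ≤ sa := Finset.sum_nonneg fun i _ => sq_nonneg _
  have hsb0 : 0 ≤ sb := Finset.sum_nonneg fun i _ => sq_nonneg _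
  have hmemS : ∀ x : Fin d → ℝ, (∑ i, x i ^ 2 = 1) →
      (fun k => x ⬝ᵥ (M k *ᵥ x)) ∈ S := fun x hx => ⟨x, hx, rfl⟩
  have hzero : ∀ (v : Fin d → ℝ), (∑ i, v i ^ 2 = 0) → v = 0 := by
    intro v hv
    funext i
    have := (Finset.sum_eq_zero_iff_of_nonneg (fun i _ => sq_nonneg (v i))).1 hv i
      (Finset.mem_univ i)
    exact pow_eq_zero_iff (by norm_num) |>.1 this
  have hquad_smul : ∀ (c : ℝ) (x : Fin d → ℝ) (k : Fin m),
      (c • x) ⬝ᵥ (M k *ᵥ (c • x)) = c ^ 2 * (x ⬝ᵥ (M k *ᵥ x)) := by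
    intro c x k
    rw [Matrix.mulVec_smul, smul_dotProduct, dotProduct_smul,
      smul_eq_mul, smul_eq_mul]
    ring
  rcases eq_or_lt_of_le hsa0 with heq | hsapos
  · -- a = 0
    have hA : a = 0 := hzero a heq.symm
    have hb1 : ∑ i, b i ^ 2 = 1 := by rw [← hsa, ← heq]; ring
    have : (fun k => a ⬝ᵥ (M k *ᵥ a) + b ⬝ᵥ (M k *ᵥ b))
        = fun k => b ⬝ᵥ (M k *ᵥ b) := by
      funext k; rw [hA]; simp
    rw [this]
    exact subset_convexHull ℝ S (hmemS b hb1)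
  rcases eq_or_lt_of_le hsb0 with heq | hsbpos
  · have hB : b = 0 := hzero b heq.symm
    have ha1 : ∑ i, a i ^ 2 = 1 := by rw [← hsa, ← heq]; ring
    have : (fun k => a ⬝ᵥ (M k *ᵥ a) + b ⬝ᵥ (M k *ᵥ b))
        = fun k => a ⬝ᵥ (M k *ᵥ a) := by
      funext k; rw [hB]; simp
    rw [this]
    exact subset_convexHull ℝ S (hmemS a ha1)
  · -- both positive
    set x := (Real.sqrt sa)⁻¹ • a with hx
    set y := (Real.sqrt sb)⁻¹ • b with hy
    have hsqa : Real.sqrt sa ^ 2 = sa := Real.sq_sqrt hsa0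
    have hsqb : Real.sqrt sb ^ 2 = sb := Real.sq_sqrt hsb0
    have hsqa0 : Real.sqrt sa ≠ 0 := by positivity
    have hsqb0 : Real.sqrt sb ≠ 0 := by positivity
    have hx1 : ∑ i, x i ^ 2 = 1 := by
      simp only [hx, Pi.smul_apply, smul_eq_mul, mul_pow, ← Finset.mul_sum]
      rw [← hsadef]
      field_simp [hsqa]
      exact hsqa.symm
    have hy1 : ∑ i, y i ^ 2 = 1 := by
      simp only [hy, Pi.smul_apply, smul_eq_mul, mul_pow, ← Finset.mul_sum]
      rw [← hsbdef]
      field_simp [hsqb]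
      exact hsqb.symm
    have hmain : (fun k => a ⬝ᵥ (M k *ᵥ a) + b ⬝ᵥ (M k *ᵥ b))
        = sa • (fun k => x ⬝ᵥ (M k *ᵥ x)) + sb • (fun k => y ⬝ᵥ (M k *ᵥ y)) := by
      funext k
      simp only [Pi.add_apply, Pi.smul_apply, smul_eq_mul]
      rw [hquad_smul, hquad_smul]
      rw [inv_pow, inv_pow, hsqa, hsqb]
      field_simp
    rw [hmain]
    exact (convex_convexHull ℝ S) (subset_convexHull ℝ S (hmemS x hx1))
      (subset_convexHull ℝ S (hmemS y hy1)) hsa0 hsb0 hsa
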